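/- If m and n are coprime odd positive integers, then for every integer k, G_k(mn) = G_k(m) G_k(n). -/

import Mathlib

open scoped BigOperators

noncomputable section

/-- The Gauss-type sum
`G_k(n) = ((1-i)/2 + (-1/n)(1+i)/2) ∑_{a mod n} (a/n) e(ak/n)` for odd `n`,
where `(·/n)` is the Jacobi symbol and `e(x) = e^{2πix}`. -/
def Gk (k : ℤ) (n : ℕ) : ℂ :=
  ((1 - Complex.I) / 2 + (jacobiSym (-1) n : ℂ) * (1 + Complex.I) / 2) *
    ∑ a ∈ Finset.range n, (jacobiSym a n : ℂ) *
      Complex.exp (2 * Real.pi * Complex.I * a * k / n)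

open Complex
set_option maxHeartbeats 1000000

-- workhorse exp congruence
lemma exp_congr' {m : ℕ} (hm : 0 < m) {a b : ℤ} (h : (m:ℤ) ∣ b - a) :
    Complex.exp (2 * Real.pi * Complex.I * a / m) = Complex.exp (2 * Real.pi * Complex.I * b / m) := by
  obtain ⟨c, hc⟩ := h
  have hm' : (m:ℂ) ≠ 0 := by exact_mod_cast hm.ne'
  have hb : (b:ℂ) = a + m * c := by
    have : b = a + m * c := by linarith
    exact_mod_cast this
  rw [hb]
  have : 2 * (Real.pi:ℂ) * Complex.I * ((a:ℂ) + m*c) / m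
      = 2*Real.pi*Complex.I*a/m + c * (2*Real.pi*Complex.I) := by
    field_simp
  rw [this, Complex.exp_add, Complex.exp_int_mul_two_pi_mul_I, mul_one]

def Sp (t : ℤ) (n : ℕ) [NeZero n] : ℂ :=
  ∑ a : ZMod n, (jacobiSym a.val n : ℂ) *
    Complex.exp (2 * Real.pi * Complex.I * (a.val * t : ℤ) / n)

lemma sum_range_eq (n : ℕ) [NeZero n] (k : ℤ) :
    ∑ a ∈ Finset.range n, (jacobiSym a n : ℂ) *
      Complex.exp (2 * Real.pi * Complex.I * a * k / n) = Sp k n := by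
  rw [Sp]
  refine Finset.sum_nbij' (i := fun a => (a : ZMod n)) (j := fun a => a.val) ?_ ?_ ?_ ?_ ?_
  · intro a ha; exact Finset.mem_univ _
  · intro a ha; exact Finset.mem_range.mpr a.val_lt
  · intro a ha; exact ZMod.val_natCast_of_lt (Finset.mem_range.mp ha)
  · intro a ha; simp [ZMod.natCast_val, ZMod.cast_id]
  · intro a ha
    rw [ZMod.val_natCast_of_lt (Finset.mem_range.mp ha)]
    push_cast
    ring_nf

lemma Sp_congr {t t' : ℤ} (n : ℕ) [NeZero n] (h : (n:ℤ) ∣ t' - t) : Sp t n = Sp t' n := by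
  refine Finset.sum_congr rfl fun a _ => ?_
  congr 1
  refine exp_congr' (Nat.pos_of_ne_zero (NeZero.ne n)) ?_
  have : (a.val : ℤ) * t' - a.val * t = a.val * (t' - t) := by ring
  rw [this]
  exact Dvd.dvd.mul_left h _

lemma Sp_shift (n : ℕ) [NeZero n] (c : ℕ) (h : Nat.Coprime c n) (t : ℤ) :
    Sp t n = (jacobiSym c n : ℂ) * Sp (c * t) n := by
  have hn0 : 0 < n := Nat.pos_of_ne_zero (NeZero.ne n)
  have hu : IsUnit (c : ZMod n) := (ZMod.unitOfCoprime c h).isUnit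
  have hinv : ((c : ZMod n)⁻¹) * (c:ZMod n) = 1 := ZMod.inv_mul_of_unit _ hu
  have hbij : Function.Bijective (fun a : ZMod n => (c : ZMod n) * a) := by
    rw [Finite.injective_iff_bijective.symm]
    intro a b hab
    have := congrArg (fun z => ((c : ZMod n)⁻¹) * z) hab
    simpa [← mul_assoc, hinv] using this
  simp only [Sp, Finset.mul_sum]
  refine (Fintype.sum_bijective _ hbij _ _ fun a => ?_).symm
  have hca : (c:ZMod n) * a = ((c * a.val : ℕ) : ZMod n) := by
    push_cast [ZMod.natCast_val, ZMod.cast_id]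
    rfl
  have hval : ((c:ZMod n) * a).val = (c * a.val) % n := by
    rw [hca, ZMod.val_natCast]
  have hmod : ((c * a.val : ℕ) : ℤ) % n = ((((c:ZMod n)*a).val : ℕ) : ℤ) := by
    rw [hval]; push_cast; ring_nf
  have hJ : (jacobiSym (((c:ZMod n)*a).val : ℤ) n : ℤ)
      = jacobiSym c n * jacobiSym a.val n := by
    rw [← hmod, ← jacobiSym.mod_left]
    push_cast
    rw [jacobiSym.mul_left]
  have h1 : (n:ℤ) ∣ ((c * a.val : ℤ) - ((((c:ZMod n)*a).val : ℕ) : ℤ)) := by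
    rw [← hmod]
    exact Int.dvd_self_sub_of_emod_eq rfl
  have hE : Complex.exp (2 * Real.pi * Complex.I * (((a.val : ℤ) * ((c:ℤ) * t)) : ℤ) / n)
      = Complex.exp (2 * Real.pi * Complex.I * ((((((c:ZMod n)*a).val : ℕ) : ℤ) * t) : ℤ) / n) := by
    refine exp_congr' hn0 ?_
    have h2 : ((((((c:ZMod n)*a).val : ℕ) : ℤ)) * t) - ((a.val:ℤ) * ((c:ℤ)*t))
        = -(((c * a.val : ℤ) - ((((c:ZMod n)*a).val : ℕ) : ℤ)) * t) := by push_cast; ring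
    rw [h2]
    exact dvd_neg.mpr (h1.mul_right t)
  have hJC : ((jacobiSym (((((c:ZMod n)*a).val : ℕ)):ℤ) n : ℤ) : ℂ)
      = (jacobiSym c n : ℂ) * (jacobiSym a.val n : ℂ) := by exact_mod_cast hJ
  rw [hJC, ← hE]
  push_cast
  ring

lemma Sp_crt (m n : ℕ) [NeZero m] [NeZero n] (hmn : Nat.Coprime m n)
    (u v k : ℤ) (huv : u * n + v * m = 1) :
    Sp k (m * n) = Sp (u * k) m * Sp (v * k) n := by
  have hm0 : 0 < m := Nat.pos_of_ne_zero (NeZero.ne m)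
  have hn0 : 0 < n := Nat.pos_of_ne_zero (NeZero.ne n)
  haveI : NeZero (m * n) := ⟨Nat.mul_ne_zero hm0.ne' hn0.ne'⟩
  have hbij : Function.Bijective
      (fun x : ZMod (m*n) => (((x.val : ℕ) : ZMod m), ((x.val : ℕ) : ZMod n))) := by
    rw [Fintype.bijective_iff_injective_and_card]
    constructor
    · intro x y hxy
      have h1 : x.val % m = y.val % m := by
        have := congrArg (fun p => (p.1 : ZMod m).val) hxy
        simpa only [ZMod.val_natCast] using this
      have h2 : x.val % n = y.val % n := by
        have := congrArg (fun p => (p.2 : ZMod n).val) hxy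
        simpa only [ZMod.val_natCast] using this
      have h3 : x.val % (m*n) = y.val % (m*n) :=
        (Nat.modEq_and_modEq_iff_modEq_mul hmn).mp ⟨h1, h2⟩
      rw [Nat.mod_eq_of_lt x.val_lt, Nat.mod_eq_of_lt y.val_lt] at h3
      exact ZMod.val_injective _ h3
    · simp [ZMod.card]
  rw [Sp, Sp, Sp, Finset.sum_mul_sum, ← Fintype.sum_prod_type']
  refine Fintype.sum_bijective _ hbij _ _ fun x => ?_
  dsimp only
  simp only [ZMod.val_natCast]
  have hmodm : ((x.val % m : ℕ) : ℤ) = (x.val : ℤ) % m := by push_cast; ring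
  have hmodn : ((x.val % n : ℕ) : ℤ) = (x.val : ℤ) % n := by push_cast; ring
  have hJm : (jacobiSym ((x.val % m : ℕ) : ℤ) m) = jacobiSym (x.val : ℤ) m := by
    rw [jacobiSym.mod_left (x.val : ℤ) m, hmodm]
  have hJn : (jacobiSym ((x.val % n : ℕ) : ℤ) n) = jacobiSym (x.val : ℤ) n := by
    rw [jacobiSym.mod_left (x.val : ℤ) n, hmodn]
  have hJ : ((jacobiSym ((x.val : ℕ) : ℤ) (m*n) : ℤ) : ℂ)
      = ((jacobiSym ((x.val % m : ℕ) : ℤ) m : ℤ) : ℂ)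
        * ((jacobiSym ((x.val % n : ℕ) : ℤ) n : ℤ) : ℂ) := by
    rw [hJm, hJn]
    exact_mod_cast congrArg (fun z : ℤ => (z : ℂ)) (jacobiSym.mul_right (x.val : ℤ) m n)
  have hEm : Complex.exp (2 * Real.pi * Complex.I * ((((x.val % m : ℕ) : ℤ) * (u*k) : ℤ) : ℂ) / (m:ℂ))
      = Complex.exp (2 * Real.pi * Complex.I * (((x.val : ℤ) * (u*k) : ℤ) : ℂ) / (m:ℂ)) := by
    refine exp_congr' hm0 ?_
    have hd : (m:ℤ) ∣ ((x.val : ℤ) - ((x.val % m : ℕ) : ℤ)) :=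
      Int.dvd_self_sub_of_emod_eq hmodm.symm
    have h2 : (x.val : ℤ) * (u*k) - ((x.val % m : ℕ) : ℤ) * (u*k)
        = ((x.val : ℤ) - ((x.val % m : ℕ) : ℤ)) * (u*k) := by ring
    rw [h2]
    exact hd.mul_right _
  have hEn : Complex.exp (2 * Real.pi * Complex.I * ((((x.val % n : ℕ) : ℤ) * (v*k) : ℤ) : ℂ) / (n:ℂ))
      = Complex.exp (2 * Real.pi * Complex.I * (((x.val : ℤ) * (v*k) : ℤ) : ℂ) / (n:ℂ)) := by
    refine exp_congr' hn0 ?_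
    have hd : (n:ℤ) ∣ ((x.val : ℤ) - ((x.val % n : ℕ) : ℤ)) :=
      Int.dvd_self_sub_of_emod_eq hmodn.symm
    have h2 : (x.val : ℤ) * (v*k) - ((x.val % n : ℕ) : ℤ) * (v*k)
        = ((x.val : ℤ) - ((x.val % n : ℕ) : ℤ)) * (v*k) := by ring
    rw [h2]
    exact hd.mul_right _
  have hmC : (m:ℂ) ≠ 0 := by exact_mod_cast hm0.ne'
  have hnC : (n:ℂ) ≠ 0 := by exact_mod_cast hn0.ne'
  have hsplit : ∀ X : ℕ, Complex.exp (2 * Real.pi * Complex.I * (((X : ℤ) * k : ℤ) : ℂ) / ((m*n : ℕ) : ℂ))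
      = Complex.exp (2 * Real.pi * Complex.I * (((X : ℤ) * (u*k) : ℤ) : ℂ) / (m:ℂ))
        * Complex.exp (2 * Real.pi * Complex.I * (((X : ℤ) * (v*k) : ℤ) : ℂ) / (n:ℂ)) := by
    intro X
    rw [← Complex.exp_add]
    congr 1
    have huvC : (u:ℂ) * n + v * m = 1 := by exact_mod_cast huv
    push_cast
    field_simp
    linear_combination (-((X:ℂ) * (k:ℂ))) * huvC
  rw [hEm, hEn, hJ, hsplit x.val]
  push_cast
  ring

lemma eps_mul (m n : ℕ) (hm : Odd m) (hn : Odd n) (hmn : Nat.Coprime m n) :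
    ((1 - Complex.I)/2 + (jacobiSym (-1) (m*n) : ℂ)*(1+Complex.I)/2)
      * ((jacobiSym n m : ℂ) * (jacobiSym m n : ℂ))
    = ((1 - Complex.I)/2 + (jacobiSym (-1) m : ℂ)*(1+Complex.I)/2)
      * ((1 - Complex.I)/2 + (jacobiSym (-1) n : ℂ)*(1+Complex.I)/2) := by
  have hmn' : Odd (m*n) := hm.mul hn
  rw [jacobiSym.at_neg_one hm, jacobiSym.at_neg_one hn, jacobiSym.at_neg_one hmn']
  have h4m : m % 4 = 1 ∨ m % 4 = 3 := by
    have := Nat.odd_iff.mp hm; omega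
  have h4n : n % 4 = 1 ∨ n % 4 = 3 := by
    have := Nat.odd_iff.mp hn; omega
  have hgcd : Int.gcd (n:ℤ) (m:ℤ) = 1 := by
    have := hmn.symm; simpa [Int.gcd_natCast_natCast] using this
  have hsq : (jacobiSym (n:ℤ) m : ℂ) * (jacobiSym (n:ℤ) m : ℂ) = 1 := by
    have := jacobiSym.sq_one hgcd
    rw [pow_two] at this
    exact_mod_cast congrArg (fun z : ℤ => (z : ℂ)) this
  rcases h4m with hm4 | hm4 <;> rcases h4n with hn4 | hn4
  · have hmn4 : (m*n) % 4 = 1 := by rw [Nat.mul_mod, hm4, hn4]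
    have hrec : jacobiSym (m:ℤ) n = jacobiSym (n:ℤ) m :=
      jacobiSym.quadratic_reciprocity_one_mod_four hm4 hn
    rw [ZMod.χ₄_nat_one_mod_four hm4, ZMod.χ₄_nat_one_mod_four hn4,
      ZMod.χ₄_nat_one_mod_four hmn4, hrec, hsq]
    push_cast
    ring
  · have hmn4 : (m*n) % 4 = 3 := by rw [Nat.mul_mod, hm4, hn4]
    have hrec : jacobiSym (m:ℤ) n = jacobiSym (n:ℤ) m :=
      jacobiSym.quadratic_reciprocity_one_mod_four hm4 hn
    rw [ZMod.χ₄_nat_one_mod_four hm4, ZMod.χ₄_nat_three_mod_four hn4,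
      ZMod.χ₄_nat_three_mod_four hmn4, hrec, hsq]
    push_cast
    ring
  · have hmn4 : (m*n) % 4 = 3 := by rw [Nat.mul_mod, hm4, hn4]
    have hrec : jacobiSym (m:ℤ) n = jacobiSym (n:ℤ) m :=
      jacobiSym.quadratic_reciprocity_one_mod_four' hm hn4
    rw [ZMod.χ₄_nat_three_mod_four hm4, ZMod.χ₄_nat_one_mod_four hn4,
      ZMod.χ₄_nat_three_mod_four hmn4, hrec, hsq]
    push_cast
    ring
  · have hmn4 : (m*n) % 4 = 1 := by rw [Nat.mul_mod, hm4, hn4]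
    have hrec : jacobiSym (m:ℤ) n = -jacobiSym (n:ℤ) m :=
      jacobiSym.quadratic_reciprocity_three_mod_four hm4 hn4
    rw [ZMod.χ₄_nat_three_mod_four hm4, ZMod.χ₄_nat_three_mod_four hn4,
      ZMod.χ₄_nat_one_mod_four hmn4, hrec]
    push_cast
    have : (jacobiSym (n:ℤ) m : ℂ) * -(jacobiSym (n:ℤ) m : ℂ) = -1 := by
      rw [mul_neg, hsq]
    rw [show ((1:ℂ) - Complex.I)/2 + 1*(1+Complex.I)/2 = 1 by ring, one_mul, this]
    linear_combination -Complex.I_sq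

/-- Multiplicativity: for coprime odd positive `m, n`, `G_k(mn) = G_k(m) G_k(n)`. -/
theorem stmt6 (m n : ℕ) (hm : Odd m) (hn : Odd n) (hm0 : 0 < m) (hn0 : 0 < n)
    (hmn : Nat.Coprime m n) (k : ℤ) :
    Gk k (m * n) = Gk k m * Gk k n := by
  haveI : NeZero m := ⟨hm0.ne'⟩
  haveI : NeZero n := ⟨hn0.ne'⟩
  haveI : NeZero (m*n) := ⟨Nat.mul_ne_zero hm0.ne' hn0.ne'⟩
  obtain ⟨u, v, huv⟩ : IsCoprime (n:ℤ) (m:ℤ) := by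
    rw [Nat.isCoprime_iff_coprime]; exact hmn.symm
  -- huv : u * n + v * m = 1
  have hcrt : Sp k (m*n) = Sp (u*k) m * Sp (v*k) n :=
    Sp_crt m n hmn u v k (by linarith [huv])
  have hshm : Sp (u*k) m = (jacobiSym n m : ℂ) * Sp ((n:ℤ) * (u*k)) m := by
    have := Sp_shift m n hmn.symm (u*k)
    simpa using this
  have hshn : Sp (v*k) n = (jacobiSym m n : ℂ) * Sp ((m:ℤ) * (v*k)) n := by
    have := Sp_shift n m hmn (v*k)
    simpa using this
  have hcm : Sp ((n:ℤ) * (u*k)) m = Sp k m := by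
    refine Sp_congr m ⟨k*v, ?_⟩
    linear_combination (-k) * huv
  have hcn : Sp ((m:ℤ) * (v*k)) n = Sp k n := by
    refine Sp_congr n ⟨k*u, ?_⟩
    linear_combination (-k) * huv
  have key := eps_mul m n hm hn hmn
  rw [Gk, Gk, Gk, sum_range_eq, sum_range_eq, sum_range_eq, hcrt, hshm, hshn, hcm, hcn]
  linear_combination (Sp k m * Sp k n) * key
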